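/- Let z be a complex number with |z| = 1, z ≠ 1 and z ≠ -1, and let l be a natural number. Then |Σ_{k=0}^{l} (l - 2k)·z^{l-2k}| ≤ (4l + 4)/|z - z⁻¹|², where the exponents l-2k are taken as integer powers of z. -/

import Mathlib

lemma chi_id (z : ℂ) (hz0 : z ≠ 0) (l : ℕ) :
    (z - z⁻¹) * ∑ k ∈ Finset.range (l + 1), z ^ ((l : ℤ) - 2 * (k : ℤ))
      = z ^ ((l : ℤ) + 1) - z ^ (-(l : ℤ) - 1) := by
  induction l with
  | zero => simp [zpow_neg]
  | succ n ih =>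
    have hstep : ∑ k ∈ Finset.range (n + 1 + 1), z ^ (((n:ℕ)+1 : ℤ) - 2 * (k : ℤ))
        = z * (∑ k ∈ Finset.range (n + 1), z ^ ((n : ℤ) - 2 * (k : ℤ)))
          + z ^ (-(n : ℤ) - 1) := by
      rw [Finset.sum_range_succ, Finset.mul_sum]
      congr 1
      · apply Finset.sum_congr rfl
        intro k _
        rw [show ((n:ℕ)+1 : ℤ) - 2*(k:ℤ) = 1 + ((n:ℤ) - 2*k) by push_cast; ring,
          zpow_add₀ hz0, zpow_one]
      · congr 1
        push_cast
        ring
    push_cast at hstep ih ⊢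
    rw [hstep]
    simp only [zpow_add₀ hz0, zpow_sub₀ hz0, zpow_neg, zpow_one] at ih ⊢
    linear_combination z * ih

lemma key_id (z : ℂ) (hz0 : z ≠ 0) (l : ℕ) :
    (z - z⁻¹) ^ 2 * ∑ k ∈ Finset.range (l + 1),
        (((l : ℤ) - 2 * (k : ℤ) : ℤ) : ℂ) * z ^ ((l : ℤ) - 2 * (k : ℤ))
      = (l : ℂ) * (z ^ ((l : ℤ) + 1) + z ^ (-(l : ℤ) - 1)) * (z - z⁻¹)
        - 2 * (z ^ (l : ℤ) - z ^ (-(l : ℤ))) := by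
  induction l with
  | zero => simp
  | succ n ih =>
    have h1 : ∀ k ∈ Finset.range (n + 1),
        ((((n:ℕ)+1 : ℤ) - 2 * (k : ℤ) : ℤ) : ℂ) * z ^ (((n:ℕ)+1 : ℤ) - 2 * (k : ℤ))
        = z * ((((n : ℤ) - 2 * (k : ℤ) : ℤ) : ℂ) * z ^ ((n : ℤ) - 2 * (k : ℤ)))
          + z * z ^ ((n : ℤ) - 2 * (k : ℤ)) := by
      intro k _
      rw [show ((n:ℕ)+1 : ℤ) - 2*(k:ℤ) = 1 + ((n:ℤ) - 2*k) by push_cast; ring,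
        zpow_add₀ hz0, zpow_one]
      push_cast
      ring
    have hstep : ∑ k ∈ Finset.range (n + 1 + 1),
          ((((n:ℕ)+1 : ℤ) - 2 * (k : ℤ) : ℤ) : ℂ) * z ^ (((n:ℕ)+1 : ℤ) - 2 * (k : ℤ))
        = z * (∑ k ∈ Finset.range (n + 1),
              (((n : ℤ) - 2 * (k : ℤ) : ℤ) : ℂ) * z ^ ((n : ℤ) - 2 * (k : ℤ)))
          + z * (∑ k ∈ Finset.range (n + 1), z ^ ((n : ℤ) - 2 * (k : ℤ)))
          - ((n : ℂ) + 1) * z ^ (-(n : ℤ) - 1) := by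
      rw [Finset.sum_range_succ, Finset.sum_congr rfl h1, Finset.sum_add_distrib,
        ← Finset.mul_sum, ← Finset.mul_sum]
      have he : ((n:ℕ)+1 : ℤ) - 2 * ((n:ℕ)+1 : ℤ) = -(n : ℤ) - 1 := by ring
      rw [show (((n:ℕ)+1 : ℕ) : ℤ) = ((n:ℕ)+1 : ℤ) by push_cast; ring] at *
      rw [he]
      push_cast
      ring
    have hchi := chi_id z hz0 n
    have hzw : z * z⁻¹ = 1 := mul_inv_cancel₀ hz0
    push_cast at hstep ih ⊢
    rw [hstep]
    simp only [zpow_add₀ hz0, zpow_sub₀ hz0, zpow_neg, zpow_one] at ih hchi ⊢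
    linear_combination z * ih + z * (z - z⁻¹) * hchi
      + (-2 * (z ^ (n:ℤ))⁻¹ * (z - z⁻¹)) * hzw

theorem stmt_1 (z : ℂ) (hz : ‖z‖ = 1) (hz1 : z ≠ 1) (hzm1 : z ≠ -1) (l : ℕ) :
    ‖∑ k ∈ Finset.range (l + 1),
        (((l : ℤ) - 2 * (k : ℤ) : ℤ) : ℂ) * z ^ ((l : ℤ) - 2 * (k : ℤ))‖
      ≤ (4 * (l : ℝ) + 4) / ‖z - z⁻¹‖ ^ 2 := by
  have hz0 : z ≠ 0 := by intro h; simp [h] at hz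
  have habs : ∀ n : ℤ, ‖z ^ n‖ = 1 := fun n => by
    rw [norm_zpow, hz, one_zpow]
  have hd : z - z⁻¹ ≠ 0 := by
    intro h
    have h2 : z * z = 1 := by
      have hzz : z = z⁻¹ := sub_eq_zero.mp h
      calc z * z = z * z⁻¹ := by rw [← hzz]
        _ = 1 := mul_inv_cancel₀ hz0
    have h3 : (z - 1) * (z + 1) = 0 := by ring_nf; linear_combination h2
    rcases mul_eq_zero.mp h3 with h4 | h4
    · exact hz1 (sub_eq_zero.mp h4)
    · exact hzm1 (eq_neg_of_add_eq_zero_left h4)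
  have hdpos : 0 < ‖z - z⁻¹‖ := by
    simpa using (norm_pos_iff.mpr hd)
  have hdle : ‖z - z⁻¹‖ ≤ 2 := by
    calc ‖z - z⁻¹‖ ≤ ‖z‖ + ‖z⁻¹‖ :=
          norm_sub_le _ _
      _ ≤ 2 := by rw [norm_inv, hz]; norm_num
  set S := ∑ k ∈ Finset.range (l + 1),
      (((l : ℤ) - 2 * (k : ℤ) : ℤ) : ℂ) * z ^ ((l : ℤ) - 2 * (k : ℤ)) with hS
  have hkey := key_id z hz0 l
  have hA : ‖z ^ ((l : ℤ) + 1) + z ^ (-(l : ℤ) - 1)‖ ≤ 2 := by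
    calc ‖z ^ ((l : ℤ) + 1) + z ^ (-(l : ℤ) - 1)‖
        ≤ ‖z ^ ((l : ℤ) + 1)‖ + ‖z ^ (-(l : ℤ) - 1)‖ :=
          norm_add_le _ _
      _ ≤ 2 := by rw [habs, habs]; norm_num
  have hB : ‖z ^ (l : ℤ) - z ^ (-(l : ℤ))‖ ≤ 2 := by
    calc ‖z ^ (l : ℤ) - z ^ (-(l : ℤ))‖
        ≤ ‖z ^ (l : ℤ)‖ + ‖z ^ (-(l : ℤ))‖ :=
          norm_sub_le _ _
      _ ≤ 2 := by rw [habs, habs]; norm_num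
  have hbound : ‖(z - z⁻¹) ^ 2 * S‖ ≤ 4 * (l : ℝ) + 4 := by
    rw [hkey]
    calc ‖(l : ℂ) * (z ^ ((l : ℤ) + 1) + z ^ (-(l : ℤ) - 1)) * (z - z⁻¹)
            - 2 * (z ^ (l : ℤ) - z ^ (-(l : ℤ)))‖
        ≤ ‖(l : ℂ) * (z ^ ((l : ℤ) + 1) + z ^ (-(l : ℤ) - 1)) * (z - z⁻¹)‖
          + ‖2 * (z ^ (l : ℤ) - z ^ (-(l : ℤ)))‖ :=
          norm_sub_le _ _
      _ ≤ (l : ℝ) * 2 * 2 + 2 * 2 := by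
          rw [norm_mul, norm_mul, norm_mul,
            show ‖(l : ℂ)‖ = (l : ℝ) by simp,
            show ‖(2 : ℂ)‖ = 2 by simp]
          gcongr <;> first | exact hA | exact hdle | exact hB
      _ = 4 * (l : ℝ) + 4 := by ring
  have heq : ‖S‖ = ‖(z - z⁻¹) ^ 2 * S‖ / ‖z - z⁻¹‖ ^ 2 := by
    rw [norm_mul, norm_pow]
    exact (mul_div_cancel_left₀ _ (pow_ne_zero 2 hdpos.ne')).symm
  rw [heq]
  gcongr
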